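/- Exponential-moment interpolation for the finite-range model: Let α > 0 and let n : [0,∞) → (0,∞) be a C¹ function such that z ↦ e^{αz} n(z) is integrable on (0,∞), e^{αz} n(z) → 0 as z → ∞, and z ↦ e^{−αz} n(z) is non-increasing. Set M = ∫₀^∞ n(z) dz and J = ∫₀^∞ e^{αz} n(z) dz. Then α M⁴ ≤ J² n(0) (J − M²/J). -/

import Mathlib

open MeasureTheory Set Filter

lemma my_cs {μ : Measure ℝ} (f g : ℝ → ℝ)
    (hf0 : 0 ≤ᵐ[μ] f) (hg0 : 0 ≤ᵐ[μ] g)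
    (hfm : AEStronglyMeasurable f μ) (hgm : AEStronglyMeasurable g μ)
    (hf2 : Integrable (fun x => f x ^ 2) μ) (hg2 : Integrable (fun x => g x ^ 2) μ) :
    (∫ x, f x * g x ∂μ) ^ 2 ≤ (∫ x, f x ^ 2 ∂μ) * (∫ x, g x ^ 2 ∂μ) := by
  have hpq : Real.HolderConjugate 2 2 := Real.HolderConjugate.two_two
  have h2 : (ENNReal.ofReal (2:ℝ)) = 2 := by norm_num
  have hfL : MemLp f (ENNReal.ofReal (2:ℝ)) μ := by
    rw [h2]; exact (memLp_two_iff_integrable_sq hfm).mpr hf2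
  have hgL : MemLp g (ENNReal.ofReal (2:ℝ)) μ := by
    rw [h2]; exact (memLp_two_iff_integrable_sq hgm).mpr hg2
  have h := integral_mul_le_Lp_mul_Lq_of_nonneg hpq hf0 hg0 hfL hgL
  have hr : ∀ x : ℝ, x ^ (2:ℝ) = x ^ 2 := fun x => by
    rw [show (2:ℝ) = ((2:ℕ):ℝ) by norm_num, Real.rpow_natCast]
  simp_rw [hr] at h
  have hA : 0 ≤ ∫ x, f x ^ 2 ∂μ := integral_nonneg fun x => sq_nonneg _
  have hB : 0 ≤ ∫ x, g x ^ 2 ∂μ := integral_nonneg fun x => sq_nonneg _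
  have hfg0 : 0 ≤ ∫ x, f x * g x ∂μ :=
    integral_nonneg_of_ae <| by filter_upwards [hf0, hg0] with x hx hy; exact mul_nonneg hx hy
  calc (∫ x, f x * g x ∂μ) ^ 2
      ≤ ((∫ x, f x ^ 2 ∂μ) ^ ((1:ℝ)/2) * (∫ x, g x ^ 2 ∂μ) ^ ((1:ℝ)/2)) ^ 2 :=
        pow_le_pow_left₀ hfg0 h 2
    _ = (∫ x, f x ^ 2 ∂μ) * (∫ x, g x ^ 2 ∂μ) := by
        rw [mul_pow, ← Real.rpow_natCast ((∫ x, f x ^ 2 ∂μ) ^ ((1:ℝ)/2)) 2,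
          ← Real.rpow_natCast ((∫ x, g x ^ 2 ∂μ) ^ ((1:ℝ)/2)) 2,
          ← Real.rpow_mul hA, ← Real.rpow_mul hB]
        norm_num

lemma my_deriv_nonpos {f : ℝ → ℝ} (hf : AntitoneOn f (Ici 0)) {z d : ℝ}
    (hz : 0 < z) (hd : HasDerivAt f d z) : d ≤ 0 := by
  have h : HasDerivWithinAt f d (Ioi z) z := hd.hasDerivWithinAt
  rw [hasDerivWithinAt_iff_tendsto_slope] at h
  have hs : Ioi z \ {z} = Ioi z := by
    ext y; simp (config := {contextual := true}) [lt_irrefl, ne_of_gt, LT.lt.ne']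
  rw [hs] at h
  refine le_of_tendsto h ?_
  filter_upwards [self_mem_nhdsWithin] with y (hy : z < y)
  rw [slope_def_field]
  apply div_nonpos_of_nonpos_of_nonneg
  · exact sub_nonpos.mpr (hf (le_of_lt hz) (le_of_lt (hz.trans hy)) hy.le)
  · linarith

theorem exponential_moment_interpolation
    (α : ℝ) (hα : 0 < α)
    (n n' : ℝ → ℝ)
    (hpos : ∀ z : ℝ, 0 ≤ z → 0 < n z)
    (hderiv : ∀ z : ℝ, 0 ≤ z → HasDerivAt n (n' z) z)
    (hcont : ContinuousOn n' (Ici 0))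
    (hint : IntegrableOn (fun z => Real.exp (α * z) * n z) (Ioi 0))
    (hlim : Tendsto (fun z => Real.exp (α * z) * n z) atTop (nhds 0))
    (hmono : AntitoneOn (fun z => Real.exp (-α * z) * n z) (Ici 0)) :
    α * (∫ z in Ioi (0:ℝ), n z) ^ 4
      ≤ (∫ z in Ioi (0:ℝ), Real.exp (α * z) * n z) ^ 2 * n 0
          * ((∫ z in Ioi (0:ℝ), Real.exp (α * z) * n z)
              - (∫ z in Ioi (0:ℝ), n z) ^ 2
                  / (∫ z in Ioi (0:ℝ), Real.exp (α * z) * n z)) := by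
  set u : ℝ → ℝ := fun z => Real.exp (-α * z) * n z with hu_def
  set w : ℝ → ℝ := fun z => Real.exp (-α * z) * (α * n z - n' z) with hw_def
  set v : ℝ → ℝ := fun z => Real.exp (α * z) * n z with hv_def
  set M : ℝ := ∫ z in Ioi (0:ℝ), n z with hM_def
  set J : ℝ := ∫ z in Ioi (0:ℝ), v z with hJ_def
  set K : ℝ := ∫ z in Ioi (0:ℝ), u z with hK_def
  clear_value M J K
  -- continuity
  have hn_cont : ContinuousOn n (Ici 0) := fun z hz =>
    (hderiv z hz).continuousAt.continuousWithinAt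
  have hu_cont : ContinuousOn u (Ici 0) :=
    ((Real.continuous_exp.comp (continuous_const.mul continuous_id)).continuousOn).mul hn_cont
  have hw_cont : ContinuousOn w (Ici 0) :=
    ((Real.continuous_exp.comp (continuous_const.mul continuous_id)).continuousOn).mul
      ((continuousOn_const.mul hn_cont).sub hcont)
  have hv_cont : ContinuousOn v (Ici 0) :=
    ((Real.continuous_exp.comp (continuous_const.mul continuous_id)).continuousOn).mul hn_cont
  have hsubset : Ioi (0:ℝ) ⊆ Ici 0 := Ioi_subset_Ici le_rfl
  -- derivative of u
  have hu_deriv : ∀ z : ℝ, 0 ≤ z → HasDerivAt u (-w z) z := by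
    intro z hz
    have he : HasDerivAt (fun z : ℝ => Real.exp (-α * z)) (Real.exp (-α * z) * (-α)) z := by
      simpa using ((hasDerivAt_id z).const_mul (-α)).exp
    have := he.mul (hderiv z hz)
    refine this.congr_deriv ?_
    simp only [hw_def]; ring
  -- w nonneg on Ioi 0
  have hw_nonneg : ∀ z ∈ Ioi (0:ℝ), 0 ≤ w z := by
    intro z hz
    have := my_deriv_nonpos hmono hz (hu_deriv z hz.le)
    linarith
  have hu_pos : ∀ z : ℝ, 0 ≤ z → 0 < u z :=
    fun z hz => mul_pos (Real.exp_pos _) (hpos z hz)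
  have hv_pos : ∀ z : ℝ, 0 ≤ z → 0 < v z :=
    fun z hz => mul_pos (Real.exp_pos _) (hpos z hz)
  -- limits
  have hed : Tendsto (fun z : ℝ => Real.exp (-(2*α) * z)) atTop (nhds 0) := by
    apply Real.tendsto_exp_atBot.comp
    exact Tendsto.const_mul_atTop_of_neg (by linarith : -(2*α) < 0) tendsto_id
  have hu0 : Tendsto u atTop (nhds 0) := by
    have := hed.mul hlim
    rw [mul_zero] at this
    refine this.congr fun z => ?_
    simp only [hu_def, hv_def, ← mul_assoc, ← Real.exp_add]
    ring_nf
  have hzu : Tendsto (fun z => z * u z) atTop (nhds 0) := by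
    have hz := tendsto_rpow_mul_exp_neg_mul_atTop_nhds_zero 1 (2*α) (by linarith)
    have := hz.mul hlim
    rw [mul_zero] at this
    refine this.congr fun z => ?_
    rw [Real.rpow_one, mul_assoc, ← mul_assoc (Real.exp (-(2*α)*z)), ← Real.exp_add]
    simp only [hu_def]
    ring_nf
  have he2u : Tendsto (fun z => Real.exp (2*α*z) * u z) atTop (nhds 0) := by
    refine hlim.congr fun z => ?_
    simp only [hu_def, hv_def, ← mul_assoc, ← Real.exp_add]
    ring_nf
  -- integrability of u and n
  have hmeas_u : AEStronglyMeasurable u (volume.restrict (Ioi (0:ℝ))) :=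
    (hu_cont.mono hsubset).aestronglyMeasurable measurableSet_Ioi
  have hmeas_n : AEStronglyMeasurable n (volume.restrict (Ioi (0:ℝ))) :=
    (hn_cont.mono hsubset).aestronglyMeasurable measurableSet_Ioi
  have hmeas_w : AEStronglyMeasurable w (volume.restrict (Ioi (0:ℝ))) :=
    (hw_cont.mono hsubset).aestronglyMeasurable measurableSet_Ioi
  have hu_int : IntegrableOn u (Ioi (0:ℝ)) := by
    apply hint.mono' hmeas_u
    filter_upwards [ae_restrict_mem measurableSet_Ioi] with z hz
    have hnz := (hpos z (le_of_lt hz)).le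
    rw [Real.norm_eq_abs, abs_of_nonneg (by positivity)]
    apply mul_le_mul_of_nonneg_right _ hnz
    exact Real.exp_le_exp.mpr (by nlinarith [hz.out, hα])
  have hn_int : IntegrableOn n (Ioi (0:ℝ)) := by
    apply hint.mono' hmeas_n
    filter_upwards [ae_restrict_mem measurableSet_Ioi] with z hz
    have hnz := (hpos z (le_of_lt hz)).le
    rw [Real.norm_eq_abs, abs_of_nonneg hnz]
    have h1 : (1:ℝ) ≤ Real.exp (α*z) := Real.one_le_exp (by nlinarith [hz.out, hα])
    have h2 : n z ≤ Real.exp (α*z) * n z := by nlinarith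
    simpa [hv_def] using h2
  -- FTC 1 : ∫ w = u 0
  have hcont_negu : ContinuousWithinAt (fun z => -u z) (Ici 0) 0 :=
    ((hu_deriv 0 le_rfl).continuousAt.continuousWithinAt).neg
  have hderiv_negu : ∀ x ∈ Ioi (0:ℝ), HasDerivAt (fun z => -u z) (w x) x := by
    intro x hx; have := (hu_deriv x hx.le).neg; rw [neg_neg] at this; exact this
  have htend_negu : Tendsto (fun z => -u z) atTop (nhds 0) := by
    simpa using hu0.neg
  have hw_int : IntegrableOn w (Ioi (0:ℝ)) :=
    integrableOn_Ioi_deriv_of_nonneg hcont_negu hderiv_negu hw_nonneg htend_negu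
  have hIw : (∫ z in Ioi (0:ℝ), w z) = u 0 := by
    have := integral_Ioi_of_hasDerivAt_of_nonneg hcont_negu hderiv_negu hw_nonneg htend_negu
    simpa using this
  -- primitive of u
  have hF_deriv : ∀ x ∈ Ioi (0:ℝ), HasDerivAt (fun z => ∫ t in (0:ℝ)..z, u t) (u x) x := by
    intro x hx
    apply intervalIntegral.integral_hasDerivAt_right
    · rw [intervalIntegrable_iff_integrableOn_Ioc_of_le (le_of_lt hx)]
      exact hu_int.mono_set Ioc_subset_Ioi_self
    · exact ContinuousOn.stronglyMeasurableAtFilter isOpen_Ioi (hu_cont.mono hsubset) x hx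
    · exact (hu_cont.mono hsubset).continuousAt (isOpen_Ioi.mem_nhds hx)
  have hF_cont : ContinuousWithinAt (fun z => ∫ t in (0:ℝ)..z, u t) (Ici 0) 0 := by
    have hicc : IntegrableOn u (Icc (0:ℝ) 1) := by
      rw [integrableOn_Icc_iff_integrableOn_Ioc]
      exact hu_int.mono_set Ioc_subset_Ioi_self
    have h := intervalIntegral.continuousOn_primitive_interval
      (a := (0:ℝ)) (b := (1:ℝ)) (μ := volume) (by rwa [uIcc_of_le zero_le_one])
    have h0 := h 0 (by rw [uIcc_of_le zero_le_one]; exact ⟨le_rfl, zero_le_one⟩)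
    rw [ContinuousWithinAt, uIcc_of_le zero_le_one,
      nhdsWithin_Icc_eq_nhdsGE zero_lt_one] at h0
    exact h0
  have hF_tend : Tendsto (fun z => ∫ t in (0:ℝ)..z, u t) atTop (nhds K) := by
    rw [hK_def]
    simpa using intervalIntegral_tendsto_integral_Ioi 0 hu_int tendsto_id
  -- FTC 2 : ∫ z * w z = K
  have hg2_deriv : ∀ x ∈ Ioi (0:ℝ),
      HasDerivAt (fun z => -(z * u z) + ∫ t in (0:ℝ)..z, u t) (x * w x) x := by
    intro x hx
    have h1 : HasDerivAt (fun z => z * u z) (1 * u x + x * (-w x)) x :=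
      (hasDerivAt_id x).mul (hu_deriv x hx.le)
    have := h1.neg.add (hF_deriv x hx)
    refine this.congr_deriv ?_
    ring
  have hg2_cont : ContinuousWithinAt (fun z => -(z * u z) + ∫ t in (0:ℝ)..z, u t) (Ici 0) 0 :=
    ((continuousWithinAt_id.mul ((hu_deriv 0 le_rfl).continuousAt.continuousWithinAt)).neg).add
      hF_cont
  have hg2_tend : Tendsto (fun z => -(z * u z) + ∫ t in (0:ℝ)..z, u t) atTop (nhds K) := by
    have := (hzu.neg).add hF_tend
    simpa using this
  have hzw_nonneg : ∀ x ∈ Ioi (0:ℝ), 0 ≤ x * w x :=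
    fun x hx => mul_nonneg (le_of_lt hx) (hw_nonneg x hx)
  have hzw_int : IntegrableOn (fun z => z * w z) (Ioi (0:ℝ)) :=
    integrableOn_Ioi_deriv_of_nonneg hg2_cont hg2_deriv hzw_nonneg hg2_tend
  have hIzw : (∫ z in Ioi (0:ℝ), z * w z) = K := by
    have := integral_Ioi_of_hasDerivAt_of_nonneg hg2_cont hg2_deriv hzw_nonneg hg2_tend
    simpa using this
  -- primitive of v
  have hG_deriv : ∀ x ∈ Ioi (0:ℝ), HasDerivAt (fun z => ∫ t in (0:ℝ)..z, v t) (v x) x := by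
    intro x hx
    apply intervalIntegral.integral_hasDerivAt_right
    · rw [intervalIntegrable_iff_integrableOn_Ioc_of_le (le_of_lt hx)]
      exact hint.mono_set Ioc_subset_Ioi_self
    · exact ContinuousOn.stronglyMeasurableAtFilter isOpen_Ioi (hv_cont.mono hsubset) x hx
    · exact (hv_cont.mono hsubset).continuousAt (isOpen_Ioi.mem_nhds hx)
  have hG_cont : ContinuousWithinAt (fun z => ∫ t in (0:ℝ)..z, v t) (Ici 0) 0 := by
    have hicc : IntegrableOn v (Icc (0:ℝ) 1) := by
      rw [integrableOn_Icc_iff_integrableOn_Ioc]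
      exact hint.mono_set Ioc_subset_Ioi_self
    have h := intervalIntegral.continuousOn_primitive_interval
      (a := (0:ℝ)) (b := (1:ℝ)) (μ := volume) (by rwa [uIcc_of_le zero_le_one])
    have h0 := h 0 (by rw [uIcc_of_le zero_le_one]; exact ⟨le_rfl, zero_le_one⟩)
    rw [ContinuousWithinAt, uIcc_of_le zero_le_one,
      nhdsWithin_Icc_eq_nhdsGE zero_lt_one] at h0
    exact h0
  have hG_tend : Tendsto (fun z => ∫ t in (0:ℝ)..z, v t) atTop (nhds J) := by
    rw [hJ_def]
    simpa using intervalIntegral_tendsto_integral_Ioi 0 hint tendsto_id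
  -- FTC 3 : ∫ exp(2αz) * w z = 2αJ + u 0
  have hEu_deriv : ∀ x : ℝ, 0 ≤ x → HasDerivAt (fun z => Real.exp (2*α*z) * u z)
      (2*α*Real.exp (2*α*x) * u x - Real.exp (2*α*x) * w x) x := by
    intro x hx
    have he : HasDerivAt (fun z : ℝ => Real.exp (2*α*z)) (Real.exp (2*α*x) * (2*α)) x := by
      simpa using ((hasDerivAt_id x).const_mul (2*α)).exp
    have := he.mul (hu_deriv x hx)
    refine this.congr_deriv ?_
    ring
  have hg3_deriv : ∀ x ∈ Ioi (0:ℝ),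
      HasDerivAt (fun z => -(Real.exp (2*α*z) * u z) + 2*α*∫ t in (0:ℝ)..z, v t)
        (Real.exp (2*α*x) * w x) x := by
    intro x hx
    have h2 := (hEu_deriv x hx.le).neg.add ((hG_deriv x hx).const_mul (2*α))
    refine h2.congr_deriv ?_
    have hvu : v x = Real.exp (2*α*x) * u x := by
      simp only [hv_def, hu_def, ← mul_assoc, ← Real.exp_add]
      ring_nf
    rw [hvu]; ring
  have hg3_cont : ContinuousWithinAt
      (fun z => -(Real.exp (2*α*z) * u z) + 2*α*∫ t in (0:ℝ)..z, v t) (Ici 0) 0 :=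
    (((hEu_deriv 0 le_rfl).continuousAt.continuousWithinAt).neg).add
      (continuousWithinAt_const.mul hG_cont)
  have hg3_tend : Tendsto (fun z => -(Real.exp (2*α*z) * u z) + 2*α*∫ t in (0:ℝ)..z, v t)
      atTop (nhds (2*α*J)) := by
    have := (he2u.neg).add (hG_tend.const_mul (2*α))
    simpa using this
  have hew_nonneg : ∀ x ∈ Ioi (0:ℝ), 0 ≤ Real.exp (2*α*x) * w x :=
    fun x hx => mul_nonneg (Real.exp_pos _).le (hw_nonneg x hx)
  have hew_int : IntegrableOn (fun z => Real.exp (2*α*z) * w z) (Ioi (0:ℝ)) :=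
    integrableOn_Ioi_deriv_of_nonneg hg3_cont hg3_deriv hew_nonneg hg3_tend
  have hIew : (∫ z in Ioi (0:ℝ), Real.exp (2*α*z) * w z) = 2*α*J + u 0 := by
    have := integral_Ioi_of_hasDerivAt_of_nonneg hg3_cont hg3_deriv hew_nonneg hg3_tend
    rw [this]
    simp
  have hu0n : u 0 = n 0 := by simp [hu_def]
  -- exp quadratic bound
  have hq : ∀ z : ℝ, 0 ≤ z → 1 + 2*α*z + 2*α^2*z^2 ≤ Real.exp (2*α*z) := by
    intro z hz
    have hx : (0:ℝ) ≤ 2*α*z := by positivity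
    have h := Real.sum_le_exp_of_nonneg hx 3
    simp [Finset.sum_range_succ, Nat.factorial] at h
    nlinarith [h]
  -- integrability of z^2 * w
  have hz2w_int : IntegrableOn (fun z => z^2 * w z) (Ioi (0:ℝ)) := by
    apply (hew_int.const_mul ((1:ℝ)/(2*α^2))).mono'
    · exact ((continuous_pow 2).continuousOn.mul
        (hw_cont.mono hsubset)).aestronglyMeasurable measurableSet_Ioi
    · filter_upwards [ae_restrict_mem measurableSet_Ioi] with z hz
      have hwz := hw_nonneg z hz
      have h1 := hq z hz.out.le
      have hpos2 : (0:ℝ) < 2*α^2 := by positivity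
      rw [Real.norm_eq_abs, abs_of_nonneg (by positivity)]
      rw [mul_comm (1/(2*α^2)), mul_one_div, le_div_iff₀ hpos2]
      nlinarith [mul_nonneg (by nlinarith [hz.out, hα] :
        (0:ℝ) ≤ Real.exp (2*α*z) - 2*α^2*z^2) hwz]
  -- Jensen / Cauchy-Schwarz 1
  have hsqw_cont : ContinuousOn (fun z => Real.sqrt (w z)) (Ioi 0) :=
    Real.continuous_sqrt.comp_continuousOn (hw_cont.mono hsubset)
  have hcs1 := my_cs (μ := volume.restrict (Ioi 0))
    (fun z => Real.sqrt (w z)) (fun z => z * Real.sqrt (w z))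
    (ae_of_all _ fun z => Real.sqrt_nonneg _)
    (by filter_upwards [ae_restrict_mem measurableSet_Ioi] with z hz
        exact mul_nonneg hz.out.le (Real.sqrt_nonneg _))
    (hsqw_cont.aestronglyMeasurable measurableSet_Ioi)
    ((continuousOn_id.mul hsqw_cont).aestronglyMeasurable measurableSet_Ioi)
    (hw_int.congr (by
      filter_upwards [ae_restrict_mem measurableSet_Ioi] with z hz
      exact (Real.sq_sqrt (hw_nonneg z hz)).symm))
    (hz2w_int.congr (by
      filter_upwards [ae_restrict_mem measurableSet_Ioi] with z hz
      rw [mul_pow, Real.sq_sqrt (hw_nonneg z hz)]))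
  have e1 : (∫ x in Ioi (0:ℝ), Real.sqrt (w x) * (x * Real.sqrt (w x))) =
      ∫ x in Ioi (0:ℝ), x * w x := by
    apply integral_congr_ae
    filter_upwards [ae_restrict_mem measurableSet_Ioi] with x hx
    have : Real.sqrt (w x) * (x * Real.sqrt (w x))
        = x * (Real.sqrt (w x) * Real.sqrt (w x)) := by ring
    rw [this, Real.mul_self_sqrt (hw_nonneg x hx)]
  have e2 : (∫ x in Ioi (0:ℝ), Real.sqrt (w x) ^ 2) = u 0 := by
    rw [← hIw]
    apply integral_congr_ae
    filter_upwards [ae_restrict_mem measurableSet_Ioi] with x hx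
    exact Real.sq_sqrt (hw_nonneg x hx)
  have e3 : (∫ x in Ioi (0:ℝ), (x * Real.sqrt (w x)) ^ 2) =
      ∫ x in Ioi (0:ℝ), x^2 * w x := by
    apply integral_congr_ae
    filter_upwards [ae_restrict_mem measurableSet_Ioi] with x hx
    rw [mul_pow, Real.sq_sqrt (hw_nonneg x hx)]
  rw [e1, hIzw, e2, e3] at hcs1
  -- integral bound for ∫ z² w
  have hsub_int : IntegrableOn
      (fun z => (1/(2*α^2)) * (Real.exp (2*α*z)*w z - w z - 2*α*(z*w z))) (Ioi (0:ℝ)) :=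
    (((hew_int.sub hw_int).sub (hzw_int.const_mul (2*α))).const_mul _)
  have hz2w_le : (∫ z in Ioi (0:ℝ), z^2*w z) ≤ (J - K)/α := by
    have hmono2 : (∫ z in Ioi (0:ℝ), z^2*w z) ≤
        ∫ z in Ioi (0:ℝ), (1/(2*α^2)) * (Real.exp (2*α*z)*w z - w z - 2*α*(z*w z)) := by
      apply setIntegral_mono_on hz2w_int hsub_int measurableSet_Ioi
      intro z hz
      have hwz := hw_nonneg z hz
      have h1 := hq z hz.out.le
      have hpos2 : (0:ℝ) < 2*α^2 := by positivity
      rw [mul_comm (1/(2*α^2)), mul_one_div, le_div_iff₀ hpos2]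
      nlinarith [mul_nonneg (by nlinarith :
        (0:ℝ) ≤ Real.exp (2*α*z) - 1 - 2*α*z - 2*α^2*z^2) hwz]
    have heval : (∫ z in Ioi (0:ℝ),
        (1/(2*α^2)) * (Real.exp (2*α*z)*w z - w z - 2*α*(z*w z)))
        = (1/(2*α^2)) * ((2*α*J + u 0) - u 0 - 2*α*K) := by
      have i1 : IntegrableOn (fun z => Real.exp (2*α*z)*w z - w z) (Ioi (0:ℝ)) :=
        hew_int.sub hw_int
      have i2 : IntegrableOn (fun z => 2*α*(z*w z)) (Ioi (0:ℝ)) :=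
        hzw_int.const_mul (2*α)
      rw [integral_const_mul]
      congr 1
      rw [integral_sub i1 i2, integral_sub hew_int hw_int, integral_const_mul,
        hIew, hIw, hIzw]
    rw [heval] at hmono2
    refine hmono2.trans (le_of_eq ?_)
    field_simp
    ring
  have hkey : α * K^2 ≤ n 0 * (J - K) := by
    have h5 : K^2 ≤ u 0 * ((J - K)/α) :=
      hcs1.trans (mul_le_mul_of_nonneg_left hz2w_le (le_of_lt (hu_pos 0 le_rfl)))
    rw [hu0n] at h5
    have h6 := mul_le_mul_of_nonneg_left h5 hα.le
    have h7 : α * (n 0 * ((J - K)/α)) = n 0 * (J - K) := by field_simp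
    linarith [h6, h7.symm ▸ h6]
  -- Cauchy-Schwarz 2 : M² ≤ J K
  have hsqv_cont : ContinuousOn (fun z => Real.sqrt (v z)) (Ioi 0) :=
    Real.continuous_sqrt.comp_continuousOn (hv_cont.mono hsubset)
  have hsqu_cont : ContinuousOn (fun z => Real.sqrt (u z)) (Ioi 0) :=
    Real.continuous_sqrt.comp_continuousOn (hu_cont.mono hsubset)
  have hcs2 := my_cs (μ := volume.restrict (Ioi 0))
    (fun z => Real.sqrt (v z)) (fun z => Real.sqrt (u z))
    (ae_of_all _ fun z => Real.sqrt_nonneg _)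
    (ae_of_all _ fun z => Real.sqrt_nonneg _)
    (hsqv_cont.aestronglyMeasurable measurableSet_Ioi)
    (hsqu_cont.aestronglyMeasurable measurableSet_Ioi)
    (hint.congr (by
      filter_upwards [ae_restrict_mem measurableSet_Ioi] with z hz
      exact (Real.sq_sqrt (hv_pos z hz.out.le).le).symm))
    (hu_int.congr (by
      filter_upwards [ae_restrict_mem measurableSet_Ioi] with z hz
      exact (Real.sq_sqrt (hu_pos z hz.out.le).le).symm))
  have e4 : (∫ x in Ioi (0:ℝ), Real.sqrt (v x) * Real.sqrt (u x)) = M := by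
    rw [hM_def]
    apply integral_congr_ae
    filter_upwards [ae_restrict_mem measurableSet_Ioi] with x hx
    rw [← Real.sqrt_mul (hv_pos x hx.out.le).le]
    have hee : Real.exp (α*x) * Real.exp (-α*x) = 1 := by
      rw [← Real.exp_add]; simp
    have hvu : v x * u x = n x * n x := by
      calc v x * u x = (Real.exp (α*x) * Real.exp (-α*x)) * (n x * n x) := by
            simp only [hv_def, hu_def]; ring
        _ = n x * n x := by rw [hee, one_mul]
    rw [hvu, Real.sqrt_mul_self (hpos x hx.out.le).le]
  have e5 : (∫ x in Ioi (0:ℝ), Real.sqrt (v x) ^ 2) = J := by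
    rw [hJ_def]
    apply integral_congr_ae
    filter_upwards [ae_restrict_mem measurableSet_Ioi] with x hx
    exact Real.sq_sqrt (hv_pos x hx.out.le).le
  have e6 : (∫ x in Ioi (0:ℝ), Real.sqrt (u x) ^ 2) = K := by
    rw [hK_def]
    apply integral_congr_ae
    filter_upwards [ae_restrict_mem measurableSet_Ioi] with x hx
    exact Real.sq_sqrt (hu_pos x hx.out.le).le
  rw [e4, e5, e6] at hcs2
  -- positivity of J
  have hJ_pos : 0 < J := by
    rw [hJ_def]
    rw [setIntegral_pos_iff_support_of_nonneg_ae
      (by filter_upwards [ae_restrict_mem measurableSet_Ioi] with z hz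
          exact (hv_pos z hz.out.le).le) hint]
    refine lt_of_lt_of_le ?_ (measure_mono (fun z hz => ⟨(hv_pos z hz.out.le).ne', hz⟩))
    rw [Real.volume_Ioi]
    exact ENNReal.zero_lt_top
  clear * - hα hpos hcs2 hkey hJ_pos
  -- final assembly
  have hgoal_eq : J^2 * n 0 * (J - M^2/J) = J * n 0 * (J^2 - M^2) := by
    field_simp
  rw [hgoal_eq]
  have a1 : M^4 ≤ (J*K)^2 := by
    calc M^4 = (M^2)^2 := by ring
      _ ≤ (J*K)^2 := pow_le_pow_left₀ (sq_nonneg M) hcs2 2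
  have a2 : α*M^4 ≤ J^2*(α*K^2) := by
    calc α*M^4 ≤ α*((J*K)^2) := mul_le_mul_of_nonneg_left a1 hα.le
      _ = J^2*(α*K^2) := by ring
  have a3 : J^2*(α*K^2) ≤ J^2*(n 0*(J-K)) := mul_le_mul_of_nonneg_left hkey (sq_nonneg J)
  have a4 : J^2*(n 0*(J-K)) ≤ J*n 0*(J^2-M^2) := by
    nlinarith [mul_nonneg (mul_nonneg hJ_pos.le (hpos 0 le_rfl).le)
      (sub_nonneg.mpr hcs2)]
  linarith
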